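/- Let S be a finite ordered normal orthogroup and β : S → T a surjective homomorphism of ordered semigroups onto an ordered band T. Then β factors through the homomorphism φ : S → E(S), a ↦ a^ω; concretely, β(s) = β(s^ω) for all s ∈ S. -/
import Mathlib


/-- `spow a n` is the power `a^(n+1)` in a semigroup. -/
def spow {S : Type*} [Semigroup S] (a : S) : ℕ → S
  | 0 => a
  | n + 1 => spow a n * a

/-- A surjective ordered-semigroup homomorphism from a finite ordered normal orthogroup
onto an ordered band factors through a ↦ a^ω: β(s) = β(s^ω) for all s. -/
theorem ordered_normal_orthogroup_band_quotient_factors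
    {S : Type*} [Semigroup S] [Fintype S] [PartialOrder S]
    (hSle_left : ∀ a b c : S, a ≤ b → c * a ≤ c * b)
    (hSle_right : ∀ a b c : S, a ≤ b → a * c ≤ b * c)
    (ω : S → S)
    (hpow : ∀ a : S, ∃ n : ℕ, ω a = spow a n)
    (hidem : ∀ a : S, ω a * ω a = ω a)
    (hcr_left : ∀ a : S, ω a * a = a)
    (hcr_right : ∀ a : S, a * ω a = a)
    (horthodox : ∀ e f : S, e * e = e → f * f = f → (e * f) * (e * f) = e * f)
    (hnormal : ∀ e f g : S, e * e = e → f * f = f → g * g = g →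
      e * f * e * g * e = e * g * e * f * e)
    {T : Type*} [Semigroup T] [PartialOrder T]
    (hTband : ∀ t : T, t * t = t)
    (hTle_left : ∀ a b c : T, a ≤ b → c * a ≤ c * b)
    (hTle_right : ∀ a b c : T, a ≤ b → a * c ≤ b * c)
    (β : S → T)
    (hβmul : ∀ s t : S, β (s * t) = β s * β t)
    (hβmono : ∀ s t : S, s ≤ t → β s ≤ β t)
    (hβsurj : Function.Surjective β) :
    ∀ s : S, β s = β (ω s) := by
  intro s
  obtain ⟨n, hn⟩ := hpow s
  have key : ∀ m : ℕ, β (spow s m) = β s := by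
    intro m
    induction m with
    | zero => rfl
    | succ m ih => rw [spow, hβmul, ih, hTband]
  rw [hn, key]
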